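/- Let n ≥ 2, let (p_{ij})_{1 ≤ i,j ≤ n} be a symmetric array of reals in [0,1] with p_{ii} = 0, and let (A_{ij})_{i < j} be independent random variables with A_{ij} Bernoulli(p_{ij}), extended symmetrically (A_{ji} = A_{ij}) with A_{ii} = 0. Let H be the random symmetric matrix with entries H_{ij} = A_{ij} - p_{ij}, and set σ² = max_{1 ≤ i ≤ n} Σ_{j ≠ i} p_{ij}(1 - p_{ij}). Then for every 0 < δ < 1, the operator norm of H satisfies ℙ( ‖H‖ ≥ √(1-δ) · σ ) ≥ 1 - exp( -(1/4) δ² σ² ). -/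

import Mathlib

open MeasureTheory ProbabilityTheory

lemma bern_integral {Ω : Type*} [MeasurableSpace Ω] (μ : Measure Ω) [IsProbabilityMeasure μ]
    (a : Ω → ℝ) (ha : Measurable a) (h01 : ∀ ω, a ω = 0 ∨ a ω = 1)
    (q : ℝ) (hq0 : 0 ≤ q) (hμ1 : μ {ω | a ω = 1} = ENNReal.ofReal q)
    (f : ℝ → ℝ) : ∫ ω, f (a ω) ∂μ = (1 - q) * f 0 + q * f 1 := by
  have hint : Integrable a μ := by
    refine (integrable_const (1:ℝ)).mono' ha.aestronglyMeasurable (ae_of_all _ fun ω => ?_)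
    rcases h01 ω with h | h <;> simp [h]
  have hset : MeasurableSet {ω | a ω = 1} := ha (measurableSet_singleton 1)
  have hEa : ∫ ω, a ω ∂μ = q := by
    have heq : (fun ω => a ω) = fun ω => Set.indicator {ω | a ω = 1} (fun _ => (1:ℝ)) ω := by
      funext ω
      rcases h01 ω with h | h <;> simp [Set.indicator, h]
    rw [heq, integral_indicator_const (1:ℝ) hset, measureReal_def, hμ1, ENNReal.toReal_ofReal hq0,
      smul_eq_mul, mul_one]
  have hfa : ∀ ω, f (a ω) = f 0 + (f 1 - f 0) * a ω := by
    intro ω; rcases h01 ω with h | h <;> simp [h]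
  calc ∫ ω, f (a ω) ∂μ = ∫ ω, (f 0 + (f 1 - f 0) * a ω) ∂μ := by
        exact integral_congr_ae (ae_of_all _ hfa)
    _ = f 0 + (f 1 - f 0) * q := by
        rw [integral_add (integrable_const _) (hint.const_mul _), MeasureTheory.integral_const_mul, hEa]
        simp
    _ = (1 - q) * f 0 + q * f 1 := by ring

lemma mgf_bern_sq_le {Ω : Type*} [MeasurableSpace Ω] (μ : Measure Ω) [IsProbabilityMeasure μ]
    (a : Ω → ℝ) (ha : Measurable a) (h01 : ∀ ω, a ω = 0 ∨ a ω = 1)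
    (q : ℝ) (hq0 : 0 ≤ q) (hq1 : q ≤ 1) (hμ1 : μ {ω | a ω = 1} = ENNReal.ofReal q)
    (t : ℝ) :
    mgf (fun ω => (a ω - q)^2) μ t ≤ Real.exp ((Real.exp t - 1) * (q * (1 - q))) := by
  have key : mgf (fun ω => (a ω - q)^2) μ t
      = (1 - q) * Real.exp (t * ((0:ℝ) - q)^2) + q * Real.exp (t * ((1:ℝ) - q)^2) :=
    bern_integral μ a ha h01 q hq0 hμ1 (fun x => Real.exp (t * (x - q)^2))
  have conv : ∀ y : ℝ, 0 ≤ y → y ≤ 1 → Real.exp (t * y) ≤ 1 + y * (Real.exp t - 1) := by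
    intro y h0 h1
    have h := convexOn_exp.2 (Set.mem_univ (0:ℝ)) (Set.mem_univ t)
      (by linarith : (0:ℝ) ≤ 1 - y) h0 (by ring)
    simp only [smul_eq_mul, mul_zero, zero_add, Real.exp_zero, mul_one] at h
    have : y * t = t * y := mul_comm _ _
    rw [this] at h
    linarith
  have h1 := conv (((0:ℝ) - q)^2) (sq_nonneg _) (by nlinarith)
  have h2 := conv (((1:ℝ) - q)^2) (sq_nonneg _) (by nlinarith)
  have hsum : (1 - q) * Real.exp (t * ((0:ℝ) - q)^2) + q * Real.exp (t * ((1:ℝ) - q)^2)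
      ≤ 1 + (Real.exp t - 1) * (q * (1 - q)) := by
    nlinarith [mul_le_mul_of_nonneg_left h1 (by linarith : (0:ℝ) ≤ 1 - q),
      mul_le_mul_of_nonneg_left h2 hq0]
  have hexp := Real.add_one_le_exp ((Real.exp t - 1) * (q * (1 - q)))
  linarith [key.le]

lemma exp_coeff {δ : ℝ} (h0 : 0 < δ) (h1 : δ < 1) :
    δ * (1 - δ) + (Real.exp (-δ) - 1) ≤ -(1/4) * δ^2 := by
  have habs : |(-δ)| ≤ 1 := by rw [abs_neg, abs_of_pos h0]; linarith
  have hb := Real.exp_bound habs (n := 3) (by norm_num)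
  simp only [Finset.sum_range_succ, Finset.sum_range_zero] at hb
  norm_num at hb
  rw [abs_of_pos h0, abs_le] at hb
  norm_num [Nat.factorial] at hb
  have hd3 : δ^3 ≤ δ^2 := by nlinarith
  nlinarith [hb.1, hb.2]

lemma pair_sum {n : ℕ} (i0 : Fin n) (g : Fin n → Fin n → ℝ) (hg : ∀ i j, g i j = g j i) :
    ∑ j ∈ Finset.univ.erase i0, g i0 j
      = ∑ q ∈ Finset.univ.filter
          (fun q : {q : Fin n × Fin n // q.1 < q.2} => q.1.1 = i0 ∨ q.1.2 = i0),
          g q.1.1 q.1.2 := by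
  refine Finset.sum_bij'
    (i := fun j hj => if h : j < i0 then ⟨(j, i0), h⟩ else
      ⟨(i0, j), lt_of_le_of_ne (not_lt.mp h) (Ne.symm (Finset.ne_of_mem_erase hj))⟩)
    (j := fun q _ => if q.1.1 = i0 then q.1.2 else q.1.1) ?_ ?_ ?_ ?_ ?_
  · intro a ha
    by_cases h : a < i0 <;> simp [h, Finset.mem_filter]
  · intro q hq
    simp only [Finset.mem_erase, Finset.mem_univ, and_true]
    by_cases h : q.1.1 = i0
    · simp only [h, if_true]
      have h4 : i0 < q.1.2 := by rw [← h]; exact q.2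
      exact h4.ne'
    · simp only [h, if_false]
      exact h
  · intro a ha
    have hne : a ≠ i0 := Finset.ne_of_mem_erase ha
    by_cases h : a < i0
    · simp [h, hne]
    · simp [h, hne]
  · intro q hq
    simp only [Finset.mem_filter, Finset.mem_univ, true_and] at hq
    by_cases h : q.1.1 = i0
    · simp only [h, if_true]
      have h2 : ¬ (q.1.2 < i0) := by rw [← h]; exact asymm q.2
      simp only [h2, dif_neg, not_false_iff]
      exact Subtype.ext (Prod.ext h.symm rfl)
    · have h2 : q.1.2 = i0 := hq.resolve_left h
      simp only [h, if_false]
      have h3 : q.1.1 < i0 := h2 ▸ q.2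
      simp only [h3, dif_pos]
      exact Subtype.ext (Prod.ext rfl h2.symm)
  · intro a ha
    by_cases h : a < i0 <;> simp [h, hg i0 a]

open MeasureTheory ProbabilityTheory

set_option maxHeartbeats 1000000 in
theorem stmt12 {Ω : Type*} [MeasurableSpace Ω] (μ : Measure Ω) [IsProbabilityMeasure μ]
    (n : ℕ) (hn : 2 ≤ n) (p : Fin n → Fin n → ℝ)
    (hp01 : ∀ i j, p i j ∈ Set.Icc (0 : ℝ) 1)
    (hpsymm : ∀ i j, p i j = p j i)
    (hpdiag : ∀ i, p i i = 0)
    (A : Fin n → Fin n → Ω → ℝ)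
    (hAmeas : ∀ i j, Measurable (A i j))
    (hAsymm : ∀ i j ω, A i j ω = A j i ω)
    (hAdiag : ∀ i ω, A i i ω = 0)
    (hA01 : ∀ i j ω, A i j ω = 0 ∨ A i j ω = 1)
    (hBer : ∀ i j, i ≠ j → μ {ω | A i j ω = 1} = ENNReal.ofReal (p i j))
    (hindep : iIndepFun
      (fun q : {q : Fin n × Fin n // q.1 < q.2} => A q.1.1 q.1.2) μ)
    (σ2 : ℝ)
    (hσ2 : σ2 = ⨆ i : Fin n, ∑ j ∈ Finset.univ.erase i, p i j * (1 - p i j))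
    (δ : ℝ) (hδ0 : 0 < δ) (hδ1 : δ < 1) :
    ENNReal.ofReal (1 - Real.exp (-(1/4) * δ^2 * σ2)) ≤
      μ {ω | Real.sqrt (1 - δ) * Real.sqrt σ2 ≤
        ‖Matrix.toEuclideanCLM (𝕜 := ℝ) (Matrix.of fun i j => A i j ω - p i j)‖} := by
  classical
  haveI : Nonempty (Fin n) := ⟨⟨0, by omega⟩⟩
  -- choose the row attaining the max
  obtain ⟨istar, -, hmax⟩ := Finset.exists_max_image Finset.univ
    (fun i => ∑ j ∈ Finset.univ.erase i, p i j * (1 - p i j))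
    ⟨⟨0, by omega⟩, Finset.mem_univ _⟩
  have hσeq : σ2 = ∑ j ∈ Finset.univ.erase istar, p istar j * (1 - p istar j) := by
    rw [hσ2]
    apply le_antisymm
    · exact ciSup_le fun i => hmax i (Finset.mem_univ i)
    · exact le_ciSup (f := fun i => ∑ j ∈ Finset.univ.erase i, p i j * (1 - p i j))
        (Set.Finite.bddAbove (Set.finite_range _)) istar
  have hσ0 : 0 ≤ σ2 := by
    rw [hσeq]
    exact Finset.sum_nonneg fun j _ =>
      mul_nonneg (hp01 istar j).1 (by linarith [(hp01 istar j).2])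
  set Y : {q : Fin n × Fin n // q.1 < q.2} → Ω → ℝ :=
    fun q => (fun x : ℝ => (x - p q.1.1 q.1.2)^2) ∘ (A q.1.1 q.1.2) with hYdef
  have hg : ∀ q : {q : Fin n × Fin n // q.1 < q.2},
      Measurable (fun x : ℝ => (x - p q.1.1 q.1.2)^2) :=
    fun q => (measurable_id.sub_const _).pow_const 2
  have hYmeas : ∀ q, Measurable (Y q) := fun q => (hg q).comp (hAmeas _ _)
  have hYindep : iIndepFun Y μ := hindep.comp _ hg
  set s : Finset {q : Fin n × Fin n // q.1 < q.2} :=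
    Finset.univ.filter (fun q => q.1.1 = istar ∨ q.1.2 = istar) with hs
  have hsum_p : ∑ q ∈ s, p q.1.1 q.1.2 * (1 - p q.1.1 q.1.2) = σ2 := by
    rw [hσeq]
    exact (pair_sum istar (fun i j => p i j * (1 - p i j))
      (fun i j => by simp only [hpsymm i j])).symm
  have hSrow : ∀ ω, (∑ q ∈ s, Y q) ω
      = ∑ j ∈ Finset.univ.erase istar, (A istar j ω - p istar j)^2 := by
    intro ω
    rw [Finset.sum_apply]
    exact (pair_sum istar (fun i j => (A i j ω - p i j)^2)
      (fun i j => by simp only [hAsymm i j, hpsymm i j])).symm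
  have hYnn : ∀ q ω, 0 ≤ Y q ω := fun q ω => sq_nonneg _
  have hSapp : ∀ ω : Ω, (∑ q ∈ s, Y q) ω = ∑ q ∈ s, Y q ω :=
    fun ω => Finset.sum_apply _ _ _
  have hSfun : (∑ q ∈ s, Y q) = fun ω => ∑ q ∈ s, Y q ω := funext hSapp
  have hSmeas : Measurable (∑ q ∈ s, Y q) := by
    rw [hSfun]; exact Finset.measurable_sum s fun q _ => hYmeas q
  have ht : (-δ) ≤ 0 := by linarith
  -- integrability
  have hintS : Integrable (fun ω => Real.exp ((-δ) * (∑ q ∈ s, Y q) ω)) μ := by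
    refine (integrable_const (1:ℝ)).mono'
      ((hSmeas.const_mul (-δ)).exp.aestronglyMeasurable)
      (ae_of_all _ fun ω => ?_)
    rw [Real.norm_eq_abs, abs_of_pos (Real.exp_pos _)]
    have h0 : 0 ≤ (∑ q ∈ s, Y q) ω := by
      rw [hSapp]; exact Finset.sum_nonneg fun q _ => hYnn q ω
    calc Real.exp ((-δ) * (∑ q ∈ s, Y q) ω) ≤ Real.exp 0 :=
          Real.exp_le_exp.mpr (mul_nonpos_of_nonpos_of_nonneg ht h0)
      _ = 1 := Real.exp_zero
  have hcher := measure_le_le_exp_mul_mgf (μ := μ) (X := ∑ q ∈ s, Y q)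
    ((1 - δ) * σ2) ht hintS
  have hmgf : mgf (∑ q ∈ s, Y q) μ (-δ) = ∏ q ∈ s, mgf (Y q) μ (-δ) :=
    hYindep.mgf_sum hYmeas s
  have hprod : ∏ q ∈ s, mgf (Y q) μ (-δ)
      ≤ Real.exp ((Real.exp (-δ) - 1) * σ2) := by
    calc ∏ q ∈ s, mgf (Y q) μ (-δ)
        ≤ ∏ q ∈ s, Real.exp ((Real.exp (-δ) - 1)
            * (p q.1.1 q.1.2 * (1 - p q.1.1 q.1.2))) := by
          refine Finset.prod_le_prod (fun q _ => mgf_nonneg) (fun q hq => ?_)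
          exact mgf_bern_sq_le μ (A q.1.1 q.1.2) (hAmeas _ _) (hA01 _ _)
            (p q.1.1 q.1.2) (hp01 _ _).1 (hp01 _ _).2 (hBer _ _ (ne_of_lt q.2)) (-δ)
      _ = Real.exp (∑ q ∈ s, (Real.exp (-δ) - 1)
            * (p q.1.1 q.1.2 * (1 - p q.1.1 q.1.2))) := (Real.exp_sum s _).symm
      _ = Real.exp ((Real.exp (-δ) - 1) * σ2) := by rw [← Finset.mul_sum, hsum_p]
  have hexp : Real.exp (-(-δ) * ((1 - δ) * σ2)) * Real.exp ((Real.exp (-δ) - 1) * σ2)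
      ≤ Real.exp (-(1/4) * δ^2 * σ2) := by
    rw [← Real.exp_add]
    apply Real.exp_le_exp.mpr
    nlinarith [mul_le_mul_of_nonneg_right (exp_coeff hδ0 hδ1) hσ0]
  -- the key toReal bound
  have hcherfinal : (μ {ω | (∑ q ∈ s, Y q) ω ≤ (1 - δ) * σ2}).toReal
      ≤ Real.exp (-(1/4) * δ^2 * σ2) := by
    refine le_trans hcher ?_
    rw [hmgf]
    exact le_trans (mul_le_mul_of_nonneg_left hprod (Real.exp_pos _).le) hexp
  -- inclusion of events
  have hsub : {ω | (1 - δ) * σ2 ≤ (∑ q ∈ s, Y q) ω}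
      ⊆ {ω | Real.sqrt (1 - δ) * Real.sqrt σ2 ≤
        ‖Matrix.toEuclideanCLM (𝕜 := ℝ) (Matrix.of fun i j => A i j ω - p i j)‖} := by
    intro ω hω
    simp only [Set.mem_setOf_eq] at hω ⊢
    set M : Matrix (Fin n) (Fin n) ℝ := Matrix.of (fun i j => A i j ω - p i j) with hM
    have happly : (Matrix.toEuclideanCLM (𝕜 := ℝ) M) (EuclideanSpace.single istar 1)
        = (WithLp.equiv 2 _).symm (M.mulVec (Pi.single istar 1)) :=
      Matrix.toEuclideanCLM_toLp M (Pi.single istar 1)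
    have hnorm2 : ‖(Matrix.toEuclideanCLM (𝕜 := ℝ) M) (EuclideanSpace.single istar 1)‖
        = Real.sqrt (∑ i, (M i istar)^2) := by
      rw [happly, EuclideanSpace.norm_eq]
      congr 1
      refine Finset.sum_congr rfl fun i _ => ?_
      rw [Matrix.mulVec_single_one]
      simp [Real.norm_eq_abs, sq_abs, Matrix.transpose_apply]
    have hsumeq : ∑ i, (M i istar)^2 = (∑ q ∈ s, Y q) ω := by
      rw [hSrow ω, ← Finset.add_sum_erase _ _ (Finset.mem_univ istar)]
      have hdiag : (M istar istar)^2 = 0 := by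
        simp [hM, hAdiag istar ω, hpdiag istar]
      rw [hdiag, zero_add]
      refine Finset.sum_congr rfl fun i hi => ?_
      simp only [hM, Matrix.of_apply]
      rw [hAsymm i istar ω, hpsymm i istar]
    have hopnorm : ‖(Matrix.toEuclideanCLM (𝕜 := ℝ) M) (EuclideanSpace.single istar 1)‖
        ≤ ‖Matrix.toEuclideanCLM (𝕜 := ℝ) M‖ := by
      calc ‖(Matrix.toEuclideanCLM (𝕜 := ℝ) M) (EuclideanSpace.single istar 1)‖
          ≤ ‖Matrix.toEuclideanCLM (𝕜 := ℝ) M‖ * ‖EuclideanSpace.single istar (1:ℝ)‖ :=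
            ContinuousLinearMap.le_opNorm _ _
        _ = ‖Matrix.toEuclideanCLM (𝕜 := ℝ) M‖ := by
            rw [EuclideanSpace.norm_single]; simp
    calc Real.sqrt (1 - δ) * Real.sqrt σ2 = Real.sqrt ((1 - δ) * σ2) :=
          (Real.sqrt_mul (by linarith) σ2).symm
      _ ≤ Real.sqrt ((∑ q ∈ s, Y q) ω) := Real.sqrt_le_sqrt hω
      _ = Real.sqrt (∑ i, (M i istar)^2) := by rw [hsumeq]
      _ = ‖(Matrix.toEuclideanCLM (𝕜 := ℝ) M) (EuclideanSpace.single istar 1)‖ :=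
          hnorm2.symm
      _ ≤ ‖Matrix.toEuclideanCLM (𝕜 := ℝ) M‖ := hopnorm
  -- measure arithmetic
  have hGmeas : MeasurableSet {ω | (∑ q ∈ s, Y q) ω < (1 - δ) * σ2} :=
    measurableSet_lt hSmeas measurable_const
  have hcompl : μ {ω | (1 - δ) * σ2 ≤ (∑ q ∈ s, Y q) ω}
      = 1 - μ {ω | (∑ q ∈ s, Y q) ω < (1 - δ) * σ2} := by
    rw [← prob_compl_eq_one_sub hGmeas]
    congr 1
    ext ω
    simp [not_lt]
  have hle : μ {ω | (∑ q ∈ s, Y q) ω < (1 - δ) * σ2}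
      ≤ ENNReal.ofReal (Real.exp (-(1/4) * δ^2 * σ2)) := by
    have hss : {ω | (∑ q ∈ s, Y q) ω < (1 - δ) * σ2}
        ⊆ {ω | (∑ q ∈ s, Y q) ω ≤ (1 - δ) * σ2} := fun ω h => by
      simp only [Set.mem_setOf_eq] at h ⊢; exact le_of_lt h
    refine le_trans (measure_mono hss) ?_
    rw [ENNReal.le_ofReal_iff_toReal_le (measure_ne_top μ _) (Real.exp_pos _).le]
    exact hcherfinal
  calc ENNReal.ofReal (1 - Real.exp (-(1/4) * δ^2 * σ2))
      = 1 - ENNReal.ofReal (Real.exp (-(1/4) * δ^2 * σ2)) := by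
        rw [ENNReal.ofReal_sub _ (Real.exp_pos _).le, ENNReal.ofReal_one]
    _ ≤ 1 - μ {ω | (∑ q ∈ s, Y q) ω < (1 - δ) * σ2} := tsub_le_tsub_left hle 1
    _ = μ {ω | (1 - δ) * σ2 ≤ (∑ q ∈ s, Y q) ω} := hcompl.symm
    _ ≤ _ := measure_mono hsub
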